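/- (Excess reject-risk decomposition.) Fix x ∈ ℝ^d and λ ∈ (0,1). Let η̂_c(x), c ∈ C, be any estimators of η_c(x) constructed from the random sample D, let ĝ(x) ∈ argmax_c η̂_c(x), and let α̂(x) ∈ {0,1} be any sample-dependent abstention indicator (α̂(x)=1 means reject). Let R̂_λ(x) = (1 − η_{ĝ(x)}(x))·1{α̂(x)=0} + λ·1{α̂(x)=1}, R*_λ(x) = min{R*(x), λ}, and α*(x) = 1{R*(x) > λ}. Then E_D[ R̂_λ(x) − R*_λ(x) ] ≤ 2·E_D[ max_{c∈C} |η_c(x) − η̂_c(x)| · 1{α̂(x)=0} ] + |λ − R*(x)| · P_D( α̂(x) ≠ α*(x) ). -/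

import Mathlib

open MeasureTheory

/-- Excess reject-risk decomposition. Fix a point `x`; `η c` denotes the conditional class
probability `η_c(x)`, with pointwise Bayes risk `R*(x) = min_c (1 − η_c(x))`. The sample
space `Ω` carries the law `P` of the sample `D`; `ηhat c ω` is any sample-dependent
estimator `η̂_c(x)`, `ghat ω ∈ argmax_c η̂_c(x)` is the plug-in classifier, and the
measurable set `accept ⊆ Ω` is the event `{α̂(x) = 0}` of any sample-dependent abstention
indicator (`α̂(x) = 1` means reject). With reject cost `λ ∈ (0,1)`, the reject-risk is
`R̂_λ(x) = (1 − η_{ĝ(x)}(x))·1{α̂(x)=0} + λ·1{α̂(x)=1}`, the optimal value is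
`R*_λ(x) = min{R*(x), λ}`, and `α*(x) = 1{R*(x) > λ}`. Then
`E_D[R̂_λ(x) − R*_λ(x)] ≤ 2·E_D[max_c |η_c(x) − η̂_c(x)|·1{α̂(x)=0}]
  + |λ − R*(x)|·P_D(α̂(x) ≠ α*(x))`. -/
theorem excess_reject_risk_decomposition
    {C : Type*} [Fintype C] [Nonempty C] [MeasurableSpace C] [MeasurableSingletonClass C]
    {Ω : Type*} [MeasurableSpace Ω] (P : Measure Ω) [IsProbabilityMeasure P]
    (lam : ℝ) (hlam : lam ∈ Set.Ioo (0 : ℝ) 1)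
    (η : C → ℝ)
    (hη_nonneg : ∀ c, 0 ≤ η c) (hη_sum : ∑ c, η c = 1)  -- conditional probabilities at x
    (Rstar : ℝ)
    (hRstar : Rstar = Finset.univ.inf' Finset.univ_nonempty (fun c => 1 - η c))
    (ηhat : C → Ω → ℝ) (hηhat_meas : ∀ c, Measurable (ηhat c))
    (ghat : Ω → C) (hghat_meas : Measurable ghat)
    (hghat : ∀ ω c, ηhat c ω ≤ ηhat (ghat ω) ω)          -- `ĝ(x) ∈ argmax_c η̂_c(x)`
    (accept : Set Ω) (haccept : MeasurableSet accept)    -- the event `{α̂(x) = 0}`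
    (hint : Integrable (fun ω =>
      Finset.univ.sup' Finset.univ_nonempty (fun c => |η c - ηhat c ω|)) P) :
    (∫ ω, (accept.indicator (fun ω => 1 - η (ghat ω)) ω
        + lam * acceptᶜ.indicator (fun _ => (1 : ℝ)) ω) ∂P) - min Rstar lam
      ≤ 2 * (∫ ω, accept.indicator
            (fun ω => Finset.univ.sup' Finset.univ_nonempty (fun c => |η c - ηhat c ω|)) ω ∂P)
        + |lam - Rstar| * (P {ω | ¬ (ω ∈ accept ↔ Rstar ≤ lam)}).toReal := by
  obtain ⟨hlam0, hlam1⟩ := hlam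
  set M : Ω → ℝ := fun ω => Finset.univ.sup' Finset.univ_nonempty (fun c => |η c - ηhat c ω|)
    with hM
  have hMc : ∀ ω c, |η c - ηhat c ω| ≤ M ω := fun ω c =>
    Finset.le_sup' (fun c => |η c - ηhat c ω|) (Finset.mem_univ c)
  have hM_nonneg : ∀ ω, 0 ≤ M ω := fun ω =>
    le_trans (abs_nonneg _) (hMc ω (Classical.arbitrary C))
  have hη_le_one : ∀ c, η c ≤ 1 := by
    intro c; rw [← hη_sum]
    exact Finset.single_le_sum (fun c _ => hη_nonneg c) (Finset.mem_univ c)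
  have hkey : ∀ ω, 1 - η (ghat ω) - 2 * M ω ≤ Rstar := by
    intro ω
    rw [hRstar]
    apply Finset.le_inf'
    intro c _
    have h1 := abs_le.mp (hMc ω (ghat ω))
    have h2 := abs_le.mp (hMc ω c)
    have h3 : ηhat c ω ≤ ηhat (ghat ω) ω := hghat ω c
    linarith [h1.1, h1.2, h2.1, h2.2]
  set bad : Set Ω := {ω | ¬ (ω ∈ accept ↔ Rstar ≤ lam)} with hbad
  have hbad_meas : MeasurableSet bad := by
    by_cases h : Rstar ≤ lam
    · have : bad = acceptᶜ := by ext ω; simp [hbad, h]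
      rw [this]; exact haccept.compl
    · have : bad = accept := by ext ω; simp [hbad, h]
      rw [this]; exact haccept
  set g : Ω → ℝ := fun ω => 2 * accept.indicator M ω
      + |lam - Rstar| * bad.indicator (fun _ => (1:ℝ)) ω + min Rstar lam with hg
  have hptwise : ∀ ω, accept.indicator (fun ω => 1 - η (ghat ω)) ω
      + lam * acceptᶜ.indicator (fun _ => (1 : ℝ)) ω ≤ g ω := by
    intro ω
    have hMω := hM_nonneg ω
    have hk := hkey ω
    by_cases hω : ω ∈ accept
    · have hc : ω ∉ acceptᶜ := by simpa using hω
      by_cases h : Rstar ≤ lam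
      · have hb : ω ∉ bad := by simp [hbad, hω, h]
        simp only [hg, Set.indicator_of_mem hω, Set.indicator_of_notMem hc,
          Set.indicator_of_notMem hb]
        have hmin : min Rstar lam = Rstar := min_eq_left h
        rw [hmin]; linarith
      · have hb : ω ∈ bad := by simp [hbad, hω, h]
        simp only [hg, Set.indicator_of_mem hω, Set.indicator_of_notMem hc,
          Set.indicator_of_mem hb]
        have hlt := lt_of_not_ge h
        have hmin : min Rstar lam = lam := min_eq_right hlt.le
        have habs : |lam - Rstar| = Rstar - lam := by
          rw [abs_of_nonpos (by linarith)]; ring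
        rw [hmin, habs]; linarith
    · have hc : ω ∈ acceptᶜ := hω
      by_cases h : Rstar ≤ lam
      · have hb : ω ∈ bad := by simp [hbad, hω, h]
        simp only [hg, Set.indicator_of_notMem hω, Set.indicator_of_mem hc,
          Set.indicator_of_mem hb]
        have hmin : min Rstar lam = Rstar := min_eq_left h
        have habs : |lam - Rstar| = lam - Rstar := abs_of_nonneg (by linarith)
        rw [hmin, habs]; linarith
      · have hb : ω ∉ bad := by simp [hbad, hω, h]
        simp only [hg, Set.indicator_of_notMem hω, Set.indicator_of_mem hc,
          Set.indicator_of_notMem hb]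
        have hmin : min Rstar lam = lam := min_eq_right (lt_of_not_ge h).le
        rw [hmin]; linarith
  have hf_nonneg : ∀ ω, 0 ≤ accept.indicator (fun ω => 1 - η (ghat ω)) ω
      + lam * acceptᶜ.indicator (fun _ => (1 : ℝ)) ω := by
    intro ω
    have h1 : 0 ≤ accept.indicator (fun ω => 1 - η (ghat ω)) ω :=
      Set.indicator_nonneg (fun ω _ => by linarith [hη_le_one (ghat ω)]) ω
    have h2 : 0 ≤ acceptᶜ.indicator (fun _ => (1:ℝ)) ω :=
      Set.indicator_nonneg (fun _ _ => zero_le_one) ω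
    positivity
  have hint1 : Integrable (accept.indicator M) P := hint.indicator haccept
  have hint2 : Integrable (bad.indicator (fun _ => (1:ℝ))) P :=
    (integrable_const (1:ℝ)).indicator hbad_meas
  have hg_int : Integrable g P :=
    ((hint1.const_mul 2).add (hint2.const_mul _)).add (integrable_const _)
  have hle : (∫ ω, (accept.indicator (fun ω => 1 - η (ghat ω)) ω
      + lam * acceptᶜ.indicator (fun _ => (1 : ℝ)) ω) ∂P) ≤ ∫ ω, g ω ∂P :=
    integral_mono_of_nonneg (Filter.Eventually.of_forall hf_nonneg) hg_int
      (Filter.Eventually.of_forall hptwise)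
  have hintB : Integrable (fun ω => 2 * accept.indicator M ω) P := hint1.const_mul 2
  have hintC : Integrable
      (fun ω => |lam - Rstar| * bad.indicator (fun _ => (1:ℝ)) ω) P := hint2.const_mul _
  have hintA : Integrable (fun ω => 2 * accept.indicator M ω
      + |lam - Rstar| * bad.indicator (fun _ => (1:ℝ)) ω) P := hintB.add hintC
  have hgval : ∫ ω, g ω ∂P = 2 * (∫ ω, accept.indicator M ω ∂P)
      + |lam - Rstar| * (P bad).toReal + min Rstar lam := by
    rw [hg]
    rw [integral_add hintA (integrable_const _), integral_add hintB hintC,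
      integral_const_mul, integral_const_mul,
      integral_indicator_const (1:ℝ) hbad_meas, integral_const]
    simp [measureReal_def]
  rw [hgval] at hle
  linarith
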